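/- Let I ⊆ ℝ be a nonempty open interval, κ > 0, and y : I → (0, ∞) a function. Suppose there exist an integer n ≥ 1, pairwise distinct reals c_1,…,c_n > 0, a constant x̄ ∈ ℝ, and differentiable functions x̂_1,…,x̂_n : I → (0, ∞) such that x̂_i′(t) = −κ c_i y(t) x̂_i(t) and y(t) = 1 − Σ_{i=1}^n x̂_i(t) − x̄ for all t ∈ I. If y also admits a second such representation with data (n′, c′_1,…,c′_{n′}, x̄′, x̂′_1,…,x̂′_{n′}) and the same κ, then n = n′, the sets {c_1,…,c_n} and {c′_1,…,c′_{n′}} are equal, and x̄ = x̄′. -/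

import Mathlib

open Set Finset intervalIntegral

lemma key_exp (S : Finset ℝ) (d : ℝ → ℝ) (u v : ℝ) (hu : 0 < u) (huv : u < v)
    (h : ∀ s ∈ Set.Ioo u v, ∑ b ∈ S, d b * s ^ b = 0) :
    ∀ b ∈ S, d b = 0 := by
  have claim : ∀ m : ℕ, ∀ s ∈ Set.Ioo u v, ∑ b ∈ S, d b * b ^ m * s ^ b = 0 := by
    intro m
    induction m with
    | zero => simpa using h
    | succ m ih =>
      intro s hs
      have hs0 : (0:ℝ) < s := hu.trans hs.1
      have hder : HasDerivAt (fun s : ℝ => ∑ b ∈ S, d b * b ^ m * s ^ b)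
          (∑ b ∈ S, d b * b ^ m * (b * s ^ (b - 1))) s := by
        apply HasDerivAt.fun_sum
        intro b _
        exact (Real.hasDerivAt_rpow_const (Or.inl hs0.ne')).const_mul _
      have hzero : HasDerivAt (fun s : ℝ => ∑ b ∈ S, d b * b ^ m * s ^ b) 0 s := by
        have heq : (fun s : ℝ => ∑ b ∈ S, d b * b ^ m * s ^ b) =ᶠ[nhds s]
            (fun _ => (0:ℝ)) := by
          filter_upwards [isOpen_Ioo.mem_nhds hs] with t ht using ih t ht
        exact (hasDerivAt_const s 0).congr_of_eventuallyEq heq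
      have hD : (∑ b ∈ S, d b * b ^ m * (b * s ^ (b - 1))) = 0 := hder.unique hzero
      have : ∑ b ∈ S, d b * b ^ (m+1) * s ^ b
          = s * ∑ b ∈ S, d b * b ^ m * (b * s ^ (b - 1)) := by
        rw [Finset.mul_sum]
        refine Finset.sum_congr rfl fun b _ => ?_
        rw [Real.rpow_sub_one hs0.ne']
        field_simp
        ring
      rw [this, hD, mul_zero]
  set s0 : ℝ := (u + v) / 2 with hs0def
  have hs0 : s0 ∈ Set.Ioo u v := ⟨by simp [hs0def]; linarith, by simp [hs0def]; linarith⟩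
  have hs0pos : (0:ℝ) < s0 := hu.trans hs0.1
  set N := S.card with hN
  set e : Fin N → ℝ := fun j => S.orderEmbOfFin rfl j with he
  have hein : Function.Injective e := (S.orderEmbOfFin rfl).injective
  have hemem : ∀ j, e j ∈ S := fun j => Finset.orderEmbOfFin_mem S rfl j
  set w : Fin N → ℝ := fun j => d (e j) * s0 ^ (e j) with hw
  have hsum : ∀ m : Fin N, ∑ j : Fin N, w j * e j ^ (m : ℕ) = 0 := by
    intro m
    have := claim (m : ℕ) s0 hs0
    rw [← this]
    rw [← Finset.sum_coe_sort S (fun b => d b * b ^ (m:ℕ) * s0 ^ b)]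
    refine (Fintype.sum_equiv (S.orderIsoOfFin rfl).toEquiv _ _ fun j => ?_)
    have : ((S.orderIsoOfFin rfl).toEquiv j : ℝ) = e j := by
      simp [he, Finset.coe_orderIsoOfFin_apply]
    rw [this]
    simp [hw]; ring
  have hwz : w = 0 := Matrix.eq_zero_of_forall_pow_sum_mul_pow_eq_zero hein hsum
  intro b hb
  obtain ⟨j, hj⟩ : ∃ j, e j = b := by
    refine ⟨(S.orderIsoOfFin rfl).symm ⟨b, hb⟩, ?_⟩
    show (S.orderEmbOfFin rfl) _ = b
    rw [← Finset.coe_orderIsoOfFin_apply, OrderIso.apply_symm_apply]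
  have : d b * s0 ^ b = 0 := by rw [← hj]; exact congrFun hwz j
  have hpos : (0:ℝ) < s0 ^ b := Real.rpow_pos_of_pos hs0pos b
  exact (mul_eq_zero.1 this).resolve_right hpos.ne'

/-- On a vaccine-surplus subinterval where no rationalist group has a positive payoff:
if the positive output `y` admits two representations
`y = 1 − Σ_i x̂_i − x̄` with positive functions `x̂_i` satisfying `x̂_i′ = −κ c_i y x̂_i`
for pairwise distinct positive payoffs `c_i` (and the same `κ > 0`), then the number of
groups, the set of payoff values, and the constant `x̄` are the same in both
representations. -/
theorem stmt_12 (a b : ℝ) (hab : a < b) (κ : ℝ) (hκ : 0 < κ) (y : ℝ → ℝ)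
    (hypos : ∀ t ∈ Set.Ioo a b, 0 < y t)
    (n n' : ℕ) (hn : 1 ≤ n) (hn' : 1 ≤ n')
    (c : Fin n → ℝ) (c' : Fin n' → ℝ)
    (hc : ∀ i, 0 < c i) (hc' : ∀ i, 0 < c' i)
    (hcd : Function.Injective c) (hcd' : Function.Injective c')
    (xbar xbar' : ℝ)
    (x : Fin n → ℝ → ℝ) (x' : Fin n' → ℝ → ℝ)
    (hxpos : ∀ i, ∀ t ∈ Set.Ioo a b, 0 < x i t)
    (hx'pos : ∀ i, ∀ t ∈ Set.Ioo a b, 0 < x' i t)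
    (hxode : ∀ i, ∀ t ∈ Set.Ioo a b, HasDerivAt (x i) (-κ * c i * y t * x i t) t)
    (hx'ode : ∀ i, ∀ t ∈ Set.Ioo a b, HasDerivAt (x' i) (-κ * c' i * y t * x' i t) t)
    (hrep : ∀ t ∈ Set.Ioo a b, y t = 1 - (∑ i, x i t) - xbar)
    (hrep' : ∀ t ∈ Set.Ioo a b, y t = 1 - (∑ i, x' i t) - xbar') :
    n = n' ∧ Set.range c = Set.range c' ∧ xbar = xbar' := by
  set t0 : ℝ := (a + b) / 2 with ht0def
  have ht0 : t0 ∈ Set.Ioo a b := ⟨by simp [ht0def]; linarith, by simp [ht0def]; linarith⟩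
  -- continuity of y on the open interval
  have hycont : ∀ t ∈ Set.Ioo a b, ContinuousAt y t := by
    intro t ht
    have hct : ContinuousAt (fun t => 1 - (∑ i, x i t) - xbar) t := by
      have : ContinuousAt (fun t => ∑ i, x i t) t :=
        (HasDerivAt.fun_sum (fun i (_ : i ∈ Finset.univ) => hxode i t ht)).continuousAt
      fun_prop
    refine hct.congr ?_
    filter_upwards [isOpen_Ioo.mem_nhds ht] with s hs using (hrep s hs).symm
  have hyconton : ContinuousOn y (Set.Ioo a b) :=
    fun t ht => (hycont t ht).continuousWithinAt
  -- the cumulative integral Y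
  set Y : ℝ → ℝ := fun t => ∫ s in t0..t, y s with hYdef
  have hY : ∀ t ∈ Set.Ioo a b, HasDerivAt Y (y t) t := by
    intro t ht
    have hsub : Set.uIcc t0 t ⊆ Set.Ioo a b :=
      Set.ordConnected_Ioo.uIcc_subset ht0 ht
    have hint : IntervalIntegrable y MeasureTheory.volume t0 t :=
      (hyconton.mono hsub).intervalIntegrable
    have hmeas : StronglyMeasurableAtFilter y (nhds t) :=
      hyconton.stronglyMeasurableAtFilter isOpen_Ioo t ht
    exact intervalIntegral.integral_hasDerivAt_right hint hmeas (hycont t ht)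
  have hY0 : Y t0 = 0 := intervalIntegral.integral_same
  -- the common factor E
  set E : ℝ → ℝ := fun t => Real.exp (-(κ * Y t)) with hEdef
  have hEpos : ∀ t, 0 < E t := fun t => Real.exp_pos _
  -- generic solution formula
  have formula : ∀ (m : ℕ) (cc : Fin m → ℝ) (xx : Fin m → ℝ → ℝ),
      (∀ i, ∀ t ∈ Set.Ioo a b, HasDerivAt (xx i) (-κ * cc i * y t * xx i t) t) →
      ∀ i, ∀ t ∈ Set.Ioo a b, xx i t = xx i t0 * E t ^ (cc i) := by
    intro m cc xx hode i t ht
    set g : ℝ → ℝ := fun t => xx i t * Real.exp (κ * cc i * Y t) with hgdef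
    have hg : ∀ t ∈ Set.Ioo a b, HasDerivAt g 0 t := by
      intro t ht
      have h1 : HasDerivAt (fun t => Real.exp (κ * cc i * Y t))
          (Real.exp (κ * cc i * Y t) * (κ * cc i * y t)) t :=
        (((hY t ht).const_mul (κ * cc i))).exp
      have h2 : HasDerivAt (fun t => xx i t * Real.exp (κ * cc i * Y t)) _ t := (hode i t ht).fun_mul h1
      convert h2 using 1
      ring
    have hdiff : DifferentiableOn ℝ g (Set.Ioo a b) :=
      fun t ht => ((hg t ht).differentiableAt).differentiableWithinAt
    have hfd : ∀ t ∈ Set.Ioo a b, fderivWithin ℝ g (Set.Ioo a b) t = 0 := by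
      intro t ht
      rw [fderivWithin_of_isOpen isOpen_Ioo ht]
      have := (hg t ht).hasFDerivAt.fderiv
      rw [this]
      ext z
      simp
    have hconst : g t = g t0 :=
      (convex_Ioo a b).is_const_of_fderivWithin_eq_zero hdiff hfd ht ht0
    have hEc : E t ^ (cc i) = Real.exp (-(κ * cc i * Y t)) := by
      show Real.exp (-(κ * Y t)) ^ cc i = _
      rw [← Real.exp_mul]
      ring_nf
    rw [hEc]
    have := hconst
    rw [hgdef] at this
    simp only [hY0, mul_zero, Real.exp_zero, mul_one] at this
    rw [← this, Real.exp_neg]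
    field_simp
  have hxf := formula n c x hxode
  have hx'f := formula n' c' x' hx'ode
  set A : Fin n → ℝ := fun i => x i t0 with hAdef
  set A' : Fin n' → ℝ := fun j => x' j t0 with hA'def
  have hApos : ∀ i, 0 < A i := fun i => hxpos i t0 ht0
  have hA'pos : ∀ j, 0 < A' j := fun j => hx'pos j t0 ht0
  -- the master pointwise identity
  have master : ∀ t ∈ Set.Ioo a b,
      (∑ i, A i * E t ^ c i) + xbar = (∑ j, A' j * E t ^ c' j) + xbar' := by
    intro t ht
    have h1 := hrep t ht
    have h2 := hrep' t ht
    have e1 : (∑ i, x i t) = ∑ i, A i * E t ^ c i :=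
      Finset.sum_congr rfl fun i _ => hxf i t ht
    have e2 : (∑ j, x' j t) = ∑ j, A' j * E t ^ c' j :=
      Finset.sum_congr rfl fun j _ => hx'f j t ht
    rw [e1] at h1; rw [e2] at h2
    linarith [h1.symm.trans h2]
  -- strict monotonicity of Y, so E takes an interval of values
  have hYmono : StrictMonoOn Y (Set.Ioo a b) := by
    apply strictMonoOn_of_deriv_pos (convex_Ioo a b)
    · exact fun t ht => (hY t ht).continuousAt.continuousWithinAt
    · intro t ht
      rw [interior_Ioo] at ht
      rw [(hY t ht).deriv]
      exact hypos t ht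
  set t1 : ℝ := (a + t0) / 2 with ht1def
  set t2 : ℝ := (t0 + b) / 2 with ht2def
  have ht1 : t1 ∈ Set.Ioo a b := ⟨by rw [ht1def]; cases ht0; linarith, by rw [ht1def]; cases ht0; linarith⟩
  have ht2 : t2 ∈ Set.Ioo a b := ⟨by rw [ht2def]; cases ht0; linarith, by rw [ht2def]; cases ht0; linarith⟩
  have ht12 : t1 < t2 := by rw [ht1def, ht2def]; cases ht0; linarith
  have hEuv : E t2 < E t1 := by
    have := hYmono ht1 ht2 ht12
    apply Real.exp_lt_exp.2
    nlinarith
  have hIccsub : Set.Icc t1 t2 ⊆ Set.Ioo a b := by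
    intro t ht
    exact ⟨ht1.1.trans_le ht.1, lt_of_le_of_lt ht.2 ht2.2⟩
  -- the coefficient bookkeeping
  classical
  set S : Finset ℝ :=
    ((Finset.univ.image c ∪ Finset.univ.image c') ∪ {0}) with hSdef
  set d : ℝ → ℝ := fun r =>
    (∑ i ∈ Finset.univ.filter (fun i => c i = r), A i)
    - (∑ j ∈ Finset.univ.filter (fun j => c' j = r), A' j)
    + (if r = 0 then xbar - xbar' else 0) with hddef
  have h0S : (0:ℝ) ∈ S := by simp [hSdef]
  have hcS : ∀ i, c i ∈ S := fun i => by
    simp [hSdef]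
  have hc'S : ∀ j, c' j ∈ S := fun j => by
    simp [hSdef]
  -- the exponential-sum identity on an interval of s-values
  have hkeyhyp : ∀ s ∈ Set.Ioo (E t2) (E t1), ∑ r ∈ S, d r * s ^ r = 0 := by
    intro s hs
    obtain ⟨t, htmem, htE⟩ : ∃ t ∈ Set.Icc t1 t2, E t = s := by
      have hEcont : ContinuousOn E (Set.Icc t1 t2) := by
        intro t ht
        have : HasDerivAt Y (y t) t := hY t (hIccsub ht)
        exact ((this.const_mul κ).neg.exp).continuousAt.continuousWithinAt
      have := intermediate_value_Icc' (le_of_lt ht12) hEcont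
      have hmem : s ∈ Set.Icc (E t2) (E t1) := ⟨le_of_lt hs.1, le_of_lt hs.2⟩
      obtain ⟨t, ht, hts⟩ := this hmem
      exact ⟨t, ht, hts⟩
    have htIoo : t ∈ Set.Ioo a b := hIccsub htmem
    have hmaster := master t htIoo
    rw [htE] at hmaster
    have expand : ∑ r ∈ S, d r * s ^ r
        = ((∑ i, A i * s ^ c i) + xbar) - ((∑ j, A' j * s ^ c' j) + xbar') := by
      have spos : (0:ℝ) < s := (hEpos t2).trans hs.1
      have e1 : ∑ r ∈ S, (∑ i ∈ Finset.univ.filter (fun i => c i = r), A i) * s ^ r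
          = ∑ i, A i * s ^ c i := by
        rw [← Finset.sum_fiberwise_of_maps_to (fun i _ => hcS i) (fun i => A i * s ^ c i)]
        refine Finset.sum_congr rfl fun r _ => ?_
        rw [Finset.sum_mul]
        refine Finset.sum_congr rfl fun i hi => ?_
        rw [(Finset.mem_filter.1 hi).2]
      have e2 : ∑ r ∈ S, (∑ j ∈ Finset.univ.filter (fun j => c' j = r), A' j) * s ^ r
          = ∑ j, A' j * s ^ c' j := by
        rw [← Finset.sum_fiberwise_of_maps_to (fun j _ => hc'S j) (fun j => A' j * s ^ c' j)]
        refine Finset.sum_congr rfl fun r _ => ?_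
        rw [Finset.sum_mul]
        refine Finset.sum_congr rfl fun j hj => ?_
        rw [(Finset.mem_filter.1 hj).2]
      have e3 : ∑ r ∈ S, (if r = 0 then xbar - xbar' else 0) * s ^ r
          = xbar - xbar' := by
        have : ∀ r ∈ S, (if r = 0 then xbar - xbar' else 0) * s ^ r
            = if r = 0 then (xbar - xbar') * s ^ r else 0 := by
          intro r _; split <;> simp
        rw [Finset.sum_congr rfl this, Finset.sum_ite_eq' S (0:ℝ)
          (fun r => (xbar - xbar') * s ^ r), if_pos h0S, Real.rpow_zero, mul_one]
      calc ∑ r ∈ S, d r * s ^ r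
          = (∑ r ∈ S, (∑ i ∈ Finset.univ.filter (fun i => c i = r), A i) * s ^ r)
            - (∑ r ∈ S, (∑ j ∈ Finset.univ.filter (fun j => c' j = r), A' j) * s ^ r)
            + (∑ r ∈ S, (if r = 0 then xbar - xbar' else 0) * s ^ r) := by
            rw [← Finset.sum_sub_distrib, ← Finset.sum_add_distrib]
            refine Finset.sum_congr rfl fun r _ => ?_
            rw [hddef]; ring
        _ = _ := by rw [e1, e2, e3]; ring
    rw [expand, hmaster]; ring
  have hd := key_exp S d (E t2) (E t1) (hEpos t2) hEuv hkeyhyp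
  -- extract the conclusions
  have hxbar : xbar = xbar' := by
    have := hd 0 h0S
    rw [hddef] at this
    simp only [if_pos rfl] at this
    have hf1 : Finset.univ.filter (fun i => c i = (0:ℝ)) = ∅ :=
      Finset.filter_eq_empty_iff.2 fun i _ => (hc i).ne'
    have hf2 : Finset.univ.filter (fun j => c' j = (0:ℝ)) = ∅ :=
      Finset.filter_eq_empty_iff.2 fun j _ => (hc' j).ne'
    rw [hf1, hf2] at this
    simp at this
    linarith
  have hrange : ∀ (m m' : ℕ) (cc : Fin m → ℝ) (cc' : Fin m' → ℝ)
      (AA : Fin m → ℝ) (AA' : Fin m' → ℝ),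
      Function.Injective cc → (∀ i, 0 < AA i) → (∀ j, 0 < AA' j) →
      (∀ r, (∑ i ∈ Finset.univ.filter (fun i => cc i = r), AA i)
        - (∑ j ∈ Finset.univ.filter (fun j => cc' j = r), AA' j) = 0 → True) → True := by
    intro _ _ _ _ _ _ _ _ _ _; trivial
  have hsub : Set.range c ⊆ Set.range c' := by
    rintro r ⟨i, rfl⟩
    have := hd (c i) (hcS i)
    simp only [hddef] at this
    rw [if_neg (hc i).ne'] at this
    have hf1 : Finset.univ.filter (fun i' => c i' = c i) = {i} := by
      ext i'
      simp only [Finset.mem_filter, Finset.mem_univ, true_and, Finset.mem_singleton]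
      exact ⟨fun h => hcd h, fun h => by rw [h]⟩
    rw [hf1, Finset.sum_singleton] at this
    by_contra hnot
    have hf2 : Finset.univ.filter (fun j => c' j = c i) = ∅ := by
      refine Finset.filter_eq_empty_iff.2 fun j _ hj => hnot ⟨j, hj⟩
    rw [hf2] at this
    simp at this
    exact (hApos i).ne' this
  have hsub' : Set.range c' ⊆ Set.range c := by
    rintro r ⟨j, rfl⟩
    have := hd (c' j) (hc'S j)
    simp only [hddef] at this
    rw [if_neg (hc' j).ne'] at this
    have hf1 : Finset.univ.filter (fun j' => c' j' = c' j) = {j} := by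
      ext j'
      simp only [Finset.mem_filter, Finset.mem_univ, true_and, Finset.mem_singleton]
      exact ⟨fun h => hcd' h, fun h => by rw [h]⟩
    rw [hf1, Finset.sum_singleton] at this
    by_contra hnot
    have hf2 : Finset.univ.filter (fun i => c i = c' j) = ∅ := by
      refine Finset.filter_eq_empty_iff.2 fun i _ hi => hnot ⟨i, hi⟩
    rw [hf2] at this
    simp at this
    exact (hA'pos j).ne' this
  have hrangeeq : Set.range c = Set.range c' := Set.Subset.antisymm hsub hsub'
  have hcard : n = n' := by
    have h1 : (Finset.univ.image c : Finset ℝ) = Finset.univ.image c' := by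
      apply Finset.coe_injective
      simp only [Finset.coe_image, Finset.coe_univ, Set.image_univ]
      exact hrangeeq
    have h2 : (Finset.univ.image c).card = n := by
      rw [Finset.card_image_of_injective _ hcd, Finset.card_univ, Fintype.card_fin]
    have h3 : (Finset.univ.image c').card = n' := by
      rw [Finset.card_image_of_injective _ hcd', Finset.card_univ, Fintype.card_fin]
    rw [← h2, h1, h3]
  exact ⟨hcard, hrangeeq, hxbar⟩
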